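/- Let T ∈ BC(X) and let s, p ∈ ρ_S(T) with s ∉ [p]. Then Q_{c,s}(T)^{-1} S_L^{-1}(p,T) + S_R^{-1}(s,T) Q_{c,p}(T)^{-1} - 2 Q_{c,s}(T)^{-1} T̲ Q_{c,p}(T)^{-1} = [ (Q_{c,s}(T)^{-1} - Q_{c,p}(T)^{-1}) p - s̄ (Q_{c,s}(T)^{-1} - Q_{c,p}(T)^{-1}) ] · (p² - 2 Re(s) p + |s|²)^{-1}. -/

import Mathlib

open scoped Quaternion

/-- The 2-sphere `[p]` of a quaternion `p`. -/
def qSphere (p : ℍ[ℝ]) : Set ℍ[ℝ] := {x | x.re = p.re ∧ ‖x.im‖ = ‖p.im‖}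

/-- `Q_{c,q}(t) = q² - q(t + t̄) + t t̄` (scalar quaternionic version). -/
noncomputable def Qc (q t : ℍ[ℝ]) : ℍ[ℝ] := q ^ 2 - q * (t + star t) + t * star t

/-- `S_L^{-1}(p,t) = (p - t̄) Q_{c,p}(t)^{-1}`. -/
noncomputable def SL (p t : ℍ[ℝ]) : ℍ[ℝ] := (p - star t) * (Qc p t)⁻¹

/-- `S_R^{-1}(s,t) = Q_{c,s}(t)^{-1} (s - t̄)`. -/
noncomputable def SR (s t : ℍ[ℝ]) : ℍ[ℝ] := (Qc s t)⁻¹ * (s - star t)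

open Quaternion in
private lemma two_coe (r : ℝ) : (2 : ℍ[ℝ]) * ((r : ℝ) : ℍ[ℝ]) = ((2 * r : ℝ) : ℍ[ℝ]) := by
  push_cast; rfl

open Quaternion in
/-- `Qc q t` written as a polynomial in `q` with real (central) coefficients. -/
private lemma Qc_eq (q t : ℍ[ℝ]) :
    Qc q t = q ^ 2 - ((2 * t.re : ℝ) : ℍ[ℝ]) * q + ((normSq t : ℝ) : ℍ[ℝ]) := by
  rw [Qc, self_add_star', mul_star_eq_coe, ← normSq_def, coe_commutes]

open Quaternion in
/-- The crucial scalar identity behind the resolvent equation. -/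
private lemma keyK (t s p : ℍ[ℝ]) :
    (Qc p t - Qc s t) * p - star s * (Qc p t - Qc s t) =
      (p + s - ((2 * t.re : ℝ) : ℍ[ℝ])) *
        (p ^ 2 - ((2 * s.re : ℝ) : ℍ[ℝ]) * p + ((normSq s : ℝ) : ℍ[ℝ])) := by
  set_option maxHeartbeats 1000000 in
  ext <;>
    simp [Qc, pow_two, re_mul, imI_mul, imJ_mul, imK_mul, normSq_def'] <;> ring

open Quaternion in
/-- If `p` is a root of the companion polynomial of `s`, then `s ∈ [p]`. -/
private lemma qsphere_of_root (s p : ℍ[ℝ])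
    (h : p ^ 2 - ((2 * s.re : ℝ) : ℍ[ℝ]) * p + ((normSq s : ℝ) : ℍ[ℝ]) = 0) :
    s ∈ qSphere p := by
  rw [Quaternion.ext_iff] at h
  obtain ⟨h0, h1, h2, h3⟩ := h
  simp [pow_two, re_mul, imI_mul, imJ_mul, imK_mul, normSq_def'] at h0 h1 h2 h3
  have him : s.imI ^ 2 + s.imJ ^ 2 + s.imK ^ 2 = p.imI ^ 2 + p.imJ ^ 2 + p.imK ^ 2 ∧
      s.re = p.re := by
    rcases eq_or_ne p.re s.re with hre | hre
    · exact ⟨by nlinarith [h0], hre.symm⟩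
    · have hI : p.imI = 0 := by
        have hz : p.imI * (p.re - s.re) = 0 := by linear_combination h1 / 2
        rcases mul_eq_zero.1 hz with h | h
        · exact h
        · exact absurd (sub_eq_zero.1 h) hre
      have hJ : p.imJ = 0 := by
        have hz : p.imJ * (p.re - s.re) = 0 := by linear_combination h2 / 2
        rcases mul_eq_zero.1 hz with h | h
        · exact h
        · exact absurd (sub_eq_zero.1 h) hre
      have hK : p.imK = 0 := by
        have hz : p.imK * (p.re - s.re) = 0 := by linear_combination h3 / 2
        rcases mul_eq_zero.1 hz with h | h
        · exact h
        · exact absurd (sub_eq_zero.1 h) hre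
      rw [hI, hJ, hK] at h0
      have hsum : (p.re - s.re) ^ 2 + (s.imI ^ 2 + s.imJ ^ 2 + s.imK ^ 2) = 0 := by
        nlinarith [h0]
      have hre0 : p.re - s.re = 0 := by
        nlinarith [sq_nonneg (p.re - s.re), sq_nonneg s.imI, sq_nonneg s.imJ, sq_nonneg s.imK]
      exact absurd (sub_eq_zero.1 hre0) hre
  refine ⟨him.2, ?_⟩
  have hn : normSq s.im = normSq p.im := by
    simp only [normSq_def', re_im, imI_im, imJ_im, imK_im]
    linarith [him.1]
  have hmul : ‖s.im‖ * ‖s.im‖ = ‖p.im‖ * ‖p.im‖ := by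
    rw [← normSq_eq_norm_mul_self, ← normSq_eq_norm_mul_self, hn]
  exact (mul_self_inj (norm_nonneg _) (norm_nonneg _)).1 hmul

/-- New resolvent equation for the `Q`-functional calculus (scalar quaternionic version):
for `s, p` in the `S`-resolvent set of `t` with `s ∉ [p]`,
`Q_{c,s}(t)⁻¹ S_L^{-1}(p,t) + S_R^{-1}(s,t) Q_{c,p}(t)⁻¹ - 2 Q_{c,s}(t)⁻¹ t̲ Q_{c,p}(t)⁻¹
 = [(Q_{c,s}(t)⁻¹ - Q_{c,p}(t)⁻¹) p - s̄ (Q_{c,s}(t)⁻¹ - Q_{c,p}(t)⁻¹)]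
   (p² - 2 Re(s) p + |s|²)⁻¹`. -/
theorem Q_resolvent_equation (t s p : ℍ[ℝ])
    (hs : Qc s t ≠ 0) (hp : Qc p t ≠ 0) (hsp : s ∉ qSphere p) :
    (Qc s t)⁻¹ * SL p t + SR s t * (Qc p t)⁻¹ -
        2 * ((Qc s t)⁻¹ * (t - ((t.re : ℝ) : ℍ[ℝ])) * (Qc p t)⁻¹) =
      (((Qc s t)⁻¹ - (Qc p t)⁻¹) * p - star s * ((Qc s t)⁻¹ - (Qc p t)⁻¹)) *
        (p ^ 2 - 2 * ((s.re : ℝ) : ℍ[ℝ]) * p + ((Quaternion.normSq s : ℝ) : ℍ[ℝ]))⁻¹ := by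
  set A := Qc s t with hA
  set B := Qc p t with hB
  rw [two_coe s.re]
  set α : ℍ[ℝ] := ((2 * t.re : ℝ) : ℍ[ℝ]) with hα
  set P : ℍ[ℝ] := p ^ 2 - ((2 * s.re : ℝ) : ℍ[ℝ]) * p + ((Quaternion.normSq s : ℝ) : ℍ[ℝ])
    with hPdef
  have hP : P ≠ 0 := fun h => hsp (qsphere_of_root s p h)
  -- commutation facts
  have hcp : Commute p B := by
    rw [hB, Qc_eq]
    exact (((Commute.refl p).pow_right 2).sub_right
      ((Quaternion.coe_commute _ p).symm.mul_right (Commute.refl p))).add_right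
      (Quaternion.coe_commute _ p).symm
  have hcpP : Commute p P := by
    rw [hPdef]
    exact (((Commute.refl p).pow_right 2).sub_right
      ((Quaternion.coe_commute _ p).symm.mul_right (Commute.refl p))).add_right
      (Quaternion.coe_commute _ p).symm
  have hcsA : Commute s A := by
    rw [hA, Qc_eq]
    exact (((Commute.refl s).pow_right 2).sub_right
      ((Quaternion.coe_commute _ s).symm.mul_right (Commute.refl s))).add_right
      (Quaternion.coe_commute _ s).symm
  have hcs : Commute (star s) A := by
    have hstar : star s = ((2 * s.re : ℝ) : ℍ[ℝ]) - s :=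
      eq_sub_of_add_eq (Quaternion.star_add_self' s)
    rw [hstar]
    exact (Quaternion.coe_commute _ _).sub_left hcsA
  have hcPB : Commute B P := by
    rw [hB, Qc_eq]
    exact ((hcpP.pow_left 2).sub_left ((Quaternion.coe_commute _ _).mul_left hcpP)).add_left
      (Quaternion.coe_commute _ _)
  -- the left-hand side
  have hstar_t : star t = α - t := eq_sub_of_add_eq (Quaternion.star_add_self' t)
  have h2t : α = 2 * ((t.re : ℝ) : ℍ[ℝ]) := (two_coe t.re).symm
  have lhs_eq : A⁻¹ * SL p t + SR s t * B⁻¹ -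
      2 * (A⁻¹ * (t - ((t.re : ℝ) : ℍ[ℝ])) * B⁻¹) = A⁻¹ * ((p + s - α) * B⁻¹) := by
    rw [SL, SR, ← hA, ← hB, hstar_t, h2t]
    noncomm_ring
  -- the bracket on the right-hand side
  have hdiff : A⁻¹ - B⁻¹ = A⁻¹ * (B - A) * B⁻¹ := by
    rw [mul_sub, sub_mul, mul_assoc A⁻¹ B, mul_inv_cancel₀ hp, mul_one, inv_mul_cancel₀ hs, one_mul]
  have hBinvp : B⁻¹ * p = p * B⁻¹ := (hcp.inv_right₀).eq.symm
  have hsAinv : star s * A⁻¹ = A⁻¹ * star s := (hcs.inv_right₀).eq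
  have hbr : (A⁻¹ - B⁻¹) * p - star s * (A⁻¹ - B⁻¹) =
      A⁻¹ * ((p + s - α) * P) * B⁻¹ := by
    have e1 : (A⁻¹ - B⁻¹) * p = A⁻¹ * ((B - A) * p) * B⁻¹ := by
      rw [hdiff, mul_assoc, hBinvp, ← mul_assoc, mul_assoc A⁻¹]
    have e2 : star s * (A⁻¹ - B⁻¹) = A⁻¹ * (star s * (B - A)) * B⁻¹ := by
      rw [hdiff, ← mul_assoc, ← mul_assoc, hsAinv, mul_assoc A⁻¹ (star s), ← mul_assoc]
    rw [e1, e2, ← sub_mul, ← mul_sub A⁻¹, keyK t s p]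
  rw [lhs_eq, hbr]
  -- move `P⁻¹` past `B⁻¹`
  have hPBinv : P * B⁻¹ = B⁻¹ * P := (hcPB.inv_left₀).eq.symm
  calc A⁻¹ * ((p + s - α) * B⁻¹)
      = A⁻¹ * (p + s - α) * B⁻¹ * (P * P⁻¹) := by
        rw [mul_inv_cancel₀ hP, mul_one, mul_assoc]
    _ = A⁻¹ * (p + s - α) * (B⁻¹ * P) * P⁻¹ := by noncomm_ring
    _ = A⁻¹ * (p + s - α) * (P * B⁻¹) * P⁻¹ := by rw [hPBinv]
    _ = A⁻¹ * ((p + s - α) * P) * B⁻¹ * P⁻¹ := by noncomm_ring
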